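/- For every integer k ≥ 1 and every real ε > 0 there exist n0 and d0 such that the following holds: if F is the forest consisting of k pairwise disjoint edges (so 2k vertices and k edges) and G is any finite simple graph on n ≥ n0 vertices with average degree d = 2|E(G)|/n ≥ d0, then the number of injective homomorphisms from F to G is at least (1 − ε)·n(n−2)(n−4)···(n−2k+2)·d(d−2)(d−4)···(d−2k+2). -/

import Mathlib

/-- Number of injective graph homomorphisms ("labeled copies") from `T` to `G`. -/
noncomputable def monCount {α β : Type} (T : SimpleGraph α) (G : SimpleGraph β) : ℕ :=
  Nat.card {f : α → β // Function.Injective f ∧ ∀ ⦃u v : α⦄, T.Adj u v → G.Adj (f u) (f v)}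

/-- Average degree `d = 2|E(G)|/n` of a finite graph. -/
noncomputable def avgDeg {β : Type} [Fintype β] (G : SimpleGraph β) : ℝ :=
  2 * (Nat.card G.edgeSet) / (Fintype.card β)

/-- Falling factorial `(x)_t = x(x-1)⋯(x-t+1)` of a real number. -/
noncomputable def fallFact (x : ℝ) (t : ℕ) : ℝ := ∏ i ∈ Finset.range t, (x - (i : ℝ))

/-- The forest consisting of `k` pairwise disjoint edges (a perfect matching on `2k` vertices). -/
def matchingGraph (k : ℕ) : SimpleGraph (Fin k × Fin 2) where
  Adj a b := a.1 = b.1 ∧ a.2 ≠ b.2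
  symm := by
    constructor
    intro a b h
    exact ⟨h.1.symm, h.2.symm⟩
  loopless := by
    constructor
    intro a h
    exact h.2 rfl


open Finset

variable {β : Type} [Fintype β]

noncomputable def Mset (G : SimpleGraph β) (k : ℕ) : Finset ((Fin k × Fin 2) → β) :=
  @Finset.filter _
    (fun f => Function.Injective f ∧ ∀ ⦃u v⦄, (matchingGraph k).Adj u v → G.Adj (f u) (f v))
    (Classical.decPred _) univ

lemma monCount_eq (G : SimpleGraph β) (k : ℕ) :
    Nat.card {f : (Fin k × Fin 2) → β // Function.Injective f ∧
      ∀ ⦃u v⦄, (matchingGraph k).Adj u v → G.Adj (f u) (f v)} = (Mset G k).card := by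
  classical
  rw [Nat.card_eq_fintype_card, Fintype.card_subtype, Mset]
  congr 1
  ext f
  simp only [Finset.mem_filter]

lemma pair_bound (G : SimpleGraph β) [DecidableRel G.Adj] [DecidableEq β] (R : Finset β) :
    2 * G.edgeFinset.card ≤
      (univ.filter fun p : β × β => G.Adj p.1 p.2 ∧ p.1 ∉ R ∧ p.2 ∉ R).card
        + 2 * R.card * Fintype.card β := by
  classical
  have hA : (univ.filter fun p : β × β => G.Adj p.1 p.2).card = 2 * G.edgeFinset.card := by
    rw [← SimpleGraph.dart_card_eq_twice_card_edges, ← Fintype.card_subtype]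
    exact (Fintype.card_congr ⟨fun d => ⟨d.toProd, d.adj⟩, fun p => ⟨p.1, p.2⟩,
      fun d => by cases d; rfl, fun p => by cases p; rfl⟩).symm
  rw [← hA]
  have hsub : (univ.filter fun p : β × β => G.Adj p.1 p.2) ⊆
      (univ.filter fun p : β × β => G.Adj p.1 p.2 ∧ p.1 ∉ R ∧ p.2 ∉ R)
        ∪ (R ×ˢ univ ∪ univ ×ˢ R) := by
    intro p hp
    simp only [mem_filter, mem_univ, true_and] at hp
    simp only [mem_union, mem_filter, mem_product, mem_univ, true_and, and_true]
    by_cases h1 : p.1 ∈ R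
    · right; left; exact h1
    · by_cases h2 : p.2 ∈ R
      · right; right; exact h2
      · left; exact ⟨hp, h1, h2⟩
  calc (univ.filter fun p : β × β => G.Adj p.1 p.2).card
      ≤ ((univ.filter fun p : β × β => G.Adj p.1 p.2 ∧ p.1 ∉ R ∧ p.2 ∉ R)
          ∪ (R ×ˢ univ ∪ univ ×ˢ R)).card := Finset.card_le_card hsub
    _ ≤ (univ.filter fun p : β × β => G.Adj p.1 p.2 ∧ p.1 ∉ R ∧ p.2 ∉ R).card
          + (R ×ˢ univ ∪ univ ×ˢ R).card := Finset.card_union_le _ _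
    _ ≤ _ := by
        have h3 : (R ×ˢ (univ : Finset β) ∪ (univ : Finset β) ×ˢ R).card
            ≤ R.card * Fintype.card β + Fintype.card β * R.card := by
          refine (Finset.card_union_le _ _).trans ?_
          rw [Finset.card_product, Finset.card_product, Finset.card_univ]
        have : R.card * Fintype.card β + Fintype.card β * R.card
            = 2 * R.card * Fintype.card β := by ring
        omega

lemma fin2cases (i : Fin 2) : i = 0 ∨ i = 1 := by omega

lemma lastcase {k : ℕ} (p : Fin (k+1)) (h : ¬((p : ℕ) < k)) : p = Fin.last k := by
  apply Fin.ext
  have := p.isLt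
  simp [Fin.last]; omega

lemma step (G : SimpleGraph β) (k : ℕ) :
    (Mset G k).card * (2 * Nat.card G.edgeSet - 4 * k * Fintype.card β)
      ≤ (Mset G (k+1)).card := by
  classical
  have hm : Nat.card G.edgeSet = G.edgeFinset.card := by
    rw [Nat.card_coe_set_eq, Set.ncard_eq_toFinset_card']
    congr 1
  let r : ((Fin (k+1) × Fin 2) → β) → ((Fin k × Fin 2) → β) :=
    fun g p => g (p.1.castSucc, p.2)
  have hmaps : ∀ g ∈ Mset G (k+1), r g ∈ Mset G k := by
    intro g hg
    simp only [Mset, Finset.mem_filter, Finset.mem_univ, true_and] at hg ⊢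
    obtain ⟨hinj, hhom⟩ := hg
    constructor
    · intro p q h
      have h2 := hinj h
      rw [Prod.mk.injEq] at h2
      exact Prod.ext (Fin.castSucc_injective _ h2.1) h2.2
    · intro u v huv
      exact hhom ⟨congrArg Fin.castSucc huv.1, huv.2⟩
  have key : ∀ f ∈ Mset G k,
      2 * Nat.card G.edgeSet - 4 * k * Fintype.card β
        ≤ ((Mset G (k+1)).filter fun g => r g = f).card := by
    intro f hf
    simp only [Mset, Finset.mem_filter, Finset.mem_univ, true_and] at hf
    obtain ⟨hfinj, hfhom⟩ := hf
    set R : Finset β := Finset.image f univ with hR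
    have hRcard : R.card ≤ 2 * k := by
      have h0 : R.card ≤ (univ : Finset (Fin k × Fin 2)).card := Finset.card_image_le
      simp [Finset.card_univ] at h0
      omega
    have hPcard : 2 * Nat.card G.edgeSet - 4 * k * Fintype.card β ≤
        ((univ.filter fun p : β × β => G.Adj p.1 p.2 ∧ p.1 ∉ R ∧ p.2 ∉ R)).card := by
      have h1 := pair_bound G R
      have h2 : 2 * R.card * Fintype.card β ≤ 4 * k * Fintype.card β :=
        Nat.mul_le_mul_right _ (by omega)
      omega
    refine hPcard.trans (le_of_eq ?_)
    set gext : β → β → ((Fin (k+1) × Fin 2) → β) := fun u v p =>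
      if h : (p.1 : ℕ) < k then f (⟨p.1, h⟩, p.2) else if p.2 = 0 then u else v with hgext
    have hext1 : ∀ u v (a : Fin k) (i : Fin 2), gext u v (a.castSucc, i) = f (a, i) := by
      intro u v a i
      have ha : ((a.castSucc : Fin (k+1)) : ℕ) < k := a.isLt
      simp only [hgext]
      rw [dif_pos ha]
      congr 1
    have hext2 : ∀ u v, gext u v (Fin.last k, 0) = u := by
      intro u v
      simp only [hgext]
      rw [dif_neg (by simp [Fin.last])]
      simp
    have hext3 : ∀ u v, gext u v (Fin.last k, 1) = v := by
      intro u v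
      simp only [hgext]
      rw [dif_neg (by simp [Fin.last])]
      rw [if_neg (by decide)]
    refine Finset.card_nbij' (fun p : β × β => gext p.1 p.2)
      (fun g => (g (Fin.last k, 0), g (Fin.last k, 1))) ?_ ?_ ?_ ?_
    · -- maps into the fiber
      intro p hp
      simp only [Finset.mem_coe, mem_filter, mem_univ, true_and] at hp
      obtain ⟨hadj, hp1, hp2⟩ := hp
      have huv : p.1 ≠ p.2 := hadj.ne
      simp only [Finset.mem_coe, Mset, mem_filter, mem_univ, true_and]
      refine ⟨⟨?_, ?_⟩, ?_⟩
      · -- injective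
        rintro ⟨x1, x2⟩ ⟨y1, y2⟩ hxy
        by_cases hx : ((x1 : ℕ) < k) <;> by_cases hy : ((y1 : ℕ) < k)
        · simp only [hgext] at hxy
          rw [dif_pos hx, dif_pos hy] at hxy
          have h2 := hfinj hxy
          rw [Prod.mk.injEq] at h2
          obtain ⟨h21, h22⟩ := h2
          simp only [Fin.mk.injEq] at h21
          rw [Prod.mk.injEq]
          exact ⟨Fin.ext h21, h22⟩
        · exfalso
          rw [lastcase y1 hy] at hxy
          have hyv : gext p.1 p.2 (Fin.last k, y2) ∉ R := by
            rcases fin2cases y2 with h | h <;> rw [h]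
            · rw [hext2]; exact hp1
            · rw [hext3]; exact hp2
          apply hyv
          rw [← hxy]
          simp only [hgext]
          rw [dif_pos hx]
          exact Finset.mem_image_of_mem f (mem_univ _)
        · exfalso
          rw [lastcase x1 hx] at hxy
          have hyv : gext p.1 p.2 (Fin.last k, x2) ∉ R := by
            rcases fin2cases x2 with h | h <;> rw [h]
            · rw [hext2]; exact hp1
            · rw [hext3]; exact hp2
          apply hyv
          rw [hxy]
          simp only [hgext]
          rw [dif_pos hy]
          exact Finset.mem_image_of_mem f (mem_univ _)
        · rw [lastcase x1 hx] at hxy ⊢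
          rw [lastcase y1 hy] at hxy ⊢
          rcases fin2cases x2 with h1 | h1 <;> rcases fin2cases y2 with h2 | h2 <;>
            rw [h1, h2] at hxy ⊢
          · exfalso; rw [hext2, hext3] at hxy; exact huv hxy
          · exfalso; rw [hext2, hext3] at hxy; exact huv hxy.symm
      · -- hom
        rintro ⟨a1, a2⟩ ⟨b1, b2⟩ hab
        obtain ⟨hab1, hab2⟩ := hab
        simp only at hab1 hab2
        by_cases h : ((a1 : ℕ) < k)
        · have hb : ((b1 : ℕ) < k) := by rw [← hab1]; exact h
          have e1 : gext p.1 p.2 (a1, a2) = f (⟨(a1 : ℕ), h⟩, a2) := by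
            simp only [hgext]; rw [dif_pos h]
          have e2 : gext p.1 p.2 (b1, b2) = f (⟨(b1 : ℕ), hb⟩, b2) := by
            simp only [hgext]; rw [dif_pos hb]
          rw [e1, e2]
          have hfst : (⟨(a1 : ℕ), h⟩ : Fin k) = ⟨(b1 : ℕ), hb⟩ :=
            Fin.ext (show (a1 : ℕ) = (b1 : ℕ) from congrArg Fin.val hab1)
          exact hfhom ⟨hfst, hab2⟩
        · have hb : ¬((b1 : ℕ) < k) := by rw [← hab1]; exact h
          have hgoal : ∀ (x1 : Fin (k+1)) (x2 : Fin 2), ¬((x1 : ℕ) < k) →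
              gext p.1 p.2 (x1, x2) = if x2 = 0 then p.1 else p.2 := by
            intro x1 x2 hx
            simp only [hgext]
            rw [dif_neg hx]
          rw [hgoal a1 a2 h, hgoal b1 b2 hb]
          rcases fin2cases a2 with h1 | h1 <;> rcases fin2cases b2 with h2 | h2
          · exact absurd (h1.trans h2.symm) hab2
          · rw [h1, h2]; simpa using hadj
          · rw [h1, h2]; simpa using hadj.symm
          · exact absurd (h1.trans h2.symm) hab2
      · -- restriction is f
        funext q
        exact hext1 p.1 p.2 q.1 q.2
    · -- reverse maps into P
      intro g hg
      simp only [Finset.mem_coe, Mset, mem_filter, mem_univ, true_and] at hg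
      obtain ⟨⟨hginj, hghom⟩, hgr⟩ := hg
      simp only [Finset.mem_coe, mem_filter, mem_univ, true_and]
      have hnotR : ∀ i : Fin 2, g (Fin.last k, i) ∉ R := by
        intro i hmem
        rw [hR] at hmem
        obtain ⟨x, _, hx⟩ := Finset.mem_image.mp hmem
        have hfx : f x = g (x.1.castSucc, x.2) := by rw [← hgr]
        rw [hfx] at hx
        have h2 := hginj hx
        rw [Prod.mk.injEq] at h2
        exact Fin.ne_of_lt (Fin.castSucc_lt_last x.1) h2.1
      have hne : ((0 : Fin 2)) ≠ 1 := by decide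
      have hadj2 : (matchingGraph (k+1)).Adj (Fin.last k, 0) (Fin.last k, 1) :=
        ⟨rfl, hne⟩
      exact ⟨hghom hadj2, hnotR 0, hnotR 1⟩
    · -- left inverse
      intro p hp
      show (gext p.1 p.2 (Fin.last k, 0), gext p.1 p.2 (Fin.last k, 1)) = p
      rw [hext2, hext3]
    · -- right inverse
      intro g hg
      simp only [Finset.mem_coe, Mset, mem_filter, mem_univ, true_and] at hg
      obtain ⟨⟨hginj, hghom⟩, hgr⟩ := hg
      show gext (g (Fin.last k, 0)) (g (Fin.last k, 1)) = g
      funext q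
      obtain ⟨q1, q2⟩ := q
      by_cases h : ((q1 : ℕ) < k)
      · have e : (⟨(q1 : ℕ), h⟩ : Fin k).castSucc = q1 := Fin.ext rfl
        simp only [hgext]
        rw [dif_pos h, ← hgr]
        show g ((⟨(q1 : ℕ), h⟩ : Fin k).castSucc, q2) = g (q1, q2)
        rw [e]
      · rw [lastcase q1 h]
        simp only [hgext]
        rw [dif_neg (by simp [Fin.last])]
        rcases fin2cases q2 with h1 | h1 <;> rw [h1] <;> simp
  calc (Mset G k).card * (2 * Nat.card G.edgeSet - 4 * k * Fintype.card β)
      = ∑ _f ∈ Mset G k, (2 * Nat.card G.edgeSet - 4 * k * Fintype.card β) := by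
        rw [Finset.sum_const, smul_eq_mul]
    _ ≤ ∑ f ∈ Mset G k, ((Mset G (k+1)).filter fun g => r g = f).card :=
        Finset.sum_le_sum key
    _ = (Mset G (k+1)).card := (Finset.card_eq_sum_card_fiberwise hmaps).symm

lemma prod_bound (G : SimpleGraph β) [Nonempty β] (k : ℕ) :
    ∏ j ∈ Finset.range k, (2 * Nat.card G.edgeSet - 4 * j * Fintype.card β)
      ≤ (Mset G k).card := by
  induction k with
  | zero =>
    rw [Finset.prod_range_zero]
    refine Nat.one_le_iff_ne_zero.mpr (Finset.card_ne_zero_of_mem (a := fun _ => Classical.arbitrary β) ?_)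
    simp only [Mset, mem_filter, mem_univ, true_and]
    exact ⟨fun p q _ => p.1.elim0, fun u v h => u.1.elim0⟩
  | succ k ih =>
    rw [Finset.prod_range_succ]
    calc (∏ j ∈ Finset.range k, (2 * Nat.card G.edgeSet - 4 * j * Fintype.card β))
          * (2 * Nat.card G.edgeSet - 4 * k * Fintype.card β)
        ≤ (Mset G k).card * (2 * Nat.card G.edgeSet - 4 * k * Fintype.card β) :=
          Nat.mul_le_mul_right _ ih
      _ ≤ (Mset G (k+1)).card := step G k


set_option maxHeartbeats 2000000 in
/-- Counting matchings: for `n` and `d` large enough, any `n`-vertex graph `G` of average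
degree `d` contains at least `(1-ε)·n(n-2)⋯(n-2k+2)·d(d-2)⋯(d-2k+2)` labeled copies of
the forest of `k` disjoint edges. -/
theorem matching_count_lower_bound (k : ℕ) (hk : 1 ≤ k) (ε : ℝ) (hε : 0 < ε) :
    ∃ (n0 : ℕ) (d0 : ℝ), ∀ (β : Type) [Fintype β] (G : SimpleGraph β),
      n0 ≤ Fintype.card β → d0 ≤ avgDeg G →
      (1 - ε) * (∏ i ∈ Finset.range k, ((Fintype.card β : ℝ) - 2 * i)) *
          (∏ i ∈ Finset.range k, (avgDeg G - 2 * i)) ≤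
        (monCount (matchingGraph k) G : ℝ) := by
  have hmc : ∀ (β : Type) [Fintype β] (G : SimpleGraph β),
      (monCount (matchingGraph k) G : ℕ) = (Mset G k).card := by
    intro β _ G
    exact monCount_eq G k
  refine ⟨2 * k, 4 * k + 2 * k ^ 2 / ε, ?_⟩
  intro β _ G hn hd
  rw [hmc β G]
  have hk1 : (1 : ℝ) ≤ (k : ℝ) := by exact_mod_cast hk
  set n : ℕ := Fintype.card β with hndef
  set d : ℝ := avgDeg G with hddef
  set m : ℕ := Nat.card G.edgeSet with hmdef
  have hn2 : 2 * k ≤ n := hn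
  have hnpos : 0 < n := by omega
  haveI : Nonempty β := Fintype.card_pos_iff.mp hnpos
  have hd0nn : (0:ℝ) ≤ 2 * k ^ 2 / ε := by positivity
  have hd4k : (4 * k : ℝ) ≤ d := by
    calc (4 * k : ℝ) ≤ 4 * k + 2 * k ^ 2 / ε := by linarith
      _ ≤ d := hd
  have hmd : (2 * m : ℝ) = n * d := by
    rw [hddef, avgDeg, ← hmdef, ← hndef]
    field_simp
  -- nat-side count
  have hnat : ∏ j ∈ Finset.range k, (2 * m - 4 * j * n) ≤ (Mset G k).card :=
    prod_bound G k
  have hstep1 : ∏ j ∈ Finset.range k, ((n : ℝ) * (d - 4 * j))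
      ≤ ((Mset G k).card : ℝ) := by
    calc ∏ j ∈ Finset.range k, ((n : ℝ) * (d - 4 * j))
        ≤ ∏ j ∈ Finset.range k, (((2 * m - 4 * j * n : ℕ)) : ℝ) := by
          refine Finset.prod_le_prod ?_ ?_
          · intro j hj
            rw [Finset.mem_range] at hj
            have hjk : (j : ℝ) ≤ (k : ℝ) := by exact_mod_cast le_of_lt hj
            have : (0:ℝ) ≤ d - 4 * j := by nlinarith
            positivity
          · intro j hj
            have heq : (n : ℝ) * (d - 4 * j) = (2 * m : ℝ) - (4 * j * n : ℕ) := by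
              push_cast
              rw [hmd]; ring
            rw [heq]
            rcases le_total (4 * j * n) (2 * m) with h | h
            · rw [Nat.cast_sub h]
              push_cast
              linarith
            · have h0 : 2 * m - 4 * j * n = 0 := Nat.sub_eq_zero_of_le h
              rw [h0, Nat.cast_zero]
              have h2 : (2 * m : ℝ) ≤ ((4 * j * n : ℕ) : ℝ) := by exact_mod_cast h
              linarith
      _ ≤ ((Mset G k).card : ℝ) := by
          rw [← Nat.cast_prod]
          exact Nat.cast_le.mpr hnat
  -- now compare with target
  rcases le_or_gt 1 ε with hε1 | hε1
  · -- trivial case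
    have hX : (0:ℝ) ≤ ∏ i ∈ Finset.range k, ((n : ℝ) - 2 * i) := by
      refine Finset.prod_nonneg ?_
      intro i hi
      rw [Finset.mem_range] at hi
      have : (2 * i : ℝ) ≤ 2 * k := by
        have : (i:ℝ) ≤ k := by exact_mod_cast le_of_lt hi
        linarith
      have hn2' : (2 * k : ℝ) ≤ n := by exact_mod_cast hn2
      linarith
    have hY : (0:ℝ) ≤ ∏ i ∈ Finset.range k, (d - 2 * i) := by
      refine Finset.prod_nonneg ?_
      intro i hi
      rw [Finset.mem_range] at hi
      have : (i:ℝ) ≤ k := by exact_mod_cast le_of_lt hi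
      nlinarith
    have hle0 : (1 - ε) * (∏ i ∈ Finset.range k, ((n : ℝ) - 2 * i)) *
        (∏ i ∈ Finset.range k, (d - 2 * i)) ≤ 0 := by
      apply mul_nonpos_of_nonpos_of_nonneg _ hY
      apply mul_nonpos_of_nonpos_of_nonneg _ hX
      linarith
    calc _ ≤ (0:ℝ) := hle0
      _ ≤ _ := by positivity
  · -- main case : ε < 1
    have hεk : 0 < ε / k := by positivity
    have hεk1 : ε / k ≤ 1 := by
      rw [div_le_one (by linarith)]
      linarith
    have hber : (1 : ℝ) - ε ≤ (1 - ε / k) ^ k := by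
      have h2 : (-2 : ℝ) ≤ -(ε / k) := by linarith
      have := one_add_mul_le_pow h2 k
      have hc : (k : ℝ) * (ε / k) = ε := by
        field_simp
      calc (1:ℝ) - ε = 1 + (k:ℝ) * (-(ε/k)) := by rw [mul_neg, hc]; ring
        _ ≤ (1 + -(ε/k)) ^ k := this
        _ = (1 - ε/k) ^ k := by ring_nf
    have hfac : ∀ i ∈ Finset.range k,
        (1 - ε / k) * (d - 2 * i) ≤ d - 4 * i ∧ 0 ≤ (1 - ε / k) * (d - 2 * i) := by
      intro i hi
      rw [Finset.mem_range] at hi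
      have hik : (i : ℝ) ≤ (k : ℝ) - 1 := by
        have : (i:ℝ) + 1 ≤ k := by exact_mod_cast hi
        linarith
      have hdi : (0:ℝ) ≤ d - 2 * i := by nlinarith
      constructor
      · have h1 : 2 * (k:ℝ) + 2 * k ^ 2 / ε ≤ d - 2 * i := by linarith
        have h2 : ε / k * (2 * (k:ℝ) + 2 * k ^ 2 / ε) = 2 * ε + 2 * k := by
          field_simp
        have h3 : 2 * (i:ℝ) ≤ ε / k * (d - 2 * i) := by
          calc 2 * (i:ℝ) ≤ 2 * ε + 2 * k := by linarith
            _ = ε / k * (2 * (k:ℝ) + 2 * k ^ 2 / ε) := h2.symm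
            _ ≤ ε / k * (d - 2 * i) := mul_le_mul_of_nonneg_left h1 (le_of_lt hεk)
        have expand : (1 - ε / k) * (d - 2 * i) = (d - 2 * i) - ε / k * (d - 2 * i) := by
          ring
        rw [expand]
        linarith
      · have h1 : (0:ℝ) ≤ 1 - ε / k := by linarith
        exact mul_nonneg h1 hdi
    have h1ε : (0:ℝ) ≤ 1 - ε := by linarith
    have hn2' : (2 * k : ℝ) ≤ (n:ℝ) := by exact_mod_cast hn2
    have hXb : ∏ i ∈ Finset.range k, ((n:ℝ) - 2 * i) ≤ (n:ℝ) ^ k := by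
      calc ∏ i ∈ Finset.range k, ((n:ℝ) - 2 * i)
          ≤ ∏ _i ∈ Finset.range k, (n:ℝ) := by
            refine Finset.prod_le_prod ?_ ?_
            · intro i hi
              rw [Finset.mem_range] at hi
              have : (i:ℝ) ≤ k := by exact_mod_cast le_of_lt hi
              linarith
            · intro i hi
              have : (0:ℝ) ≤ (i:ℝ) := by positivity
              linarith
        _ = (n:ℝ) ^ k := by rw [Finset.prod_const, Finset.card_range]
    have hY : (0:ℝ) ≤ ∏ i ∈ Finset.range k, (d - 2 * i) := by
      refine Finset.prod_nonneg ?_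
      intro i hi
      rw [Finset.mem_range] at hi
      have : (i:ℝ) ≤ k := by exact_mod_cast le_of_lt hi
      linarith
    have hprod1 : (1 - ε) * (∏ i ∈ Finset.range k, (d - 2 * i))
        ≤ ∏ j ∈ Finset.range k, (d - 4 * j) := by
      calc (1 - ε) * ∏ i ∈ Finset.range k, (d - 2 * i)
          ≤ (1 - ε/k)^k * ∏ i ∈ Finset.range k, (d - 2 * i) :=
            mul_le_mul_of_nonneg_right hber hY
        _ = ∏ i ∈ Finset.range k, ((1 - ε/k) * (d - 2 * i)) := by
            rw [Finset.prod_mul_distrib, Finset.prod_const, Finset.card_range]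
        _ ≤ ∏ i ∈ Finset.range k, (d - 4 * i) :=
            Finset.prod_le_prod (fun i hi => (hfac i hi).2) (fun i hi => (hfac i hi).1)
    calc (1 - ε) * (∏ i ∈ Finset.range k, ((n:ℝ) - 2 * i))
            * (∏ i ∈ Finset.range k, (d - 2 * i))
        ≤ (1 - ε) * ((n:ℝ)^k) * (∏ i ∈ Finset.range k, (d - 2 * i)) := by
          apply mul_le_mul_of_nonneg_right _ hY
          exact mul_le_mul_of_nonneg_left hXb h1ε
      _ = (n:ℝ)^k * ((1 - ε) * ∏ i ∈ Finset.range k, (d - 2 * i)) := by ring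
      _ ≤ (n:ℝ)^k * ∏ j ∈ Finset.range k, (d - 4 * j) := by
          exact mul_le_mul_of_nonneg_left hprod1 (by positivity)
      _ = ∏ j ∈ Finset.range k, ((n:ℝ) * (d - 4 * j)) := by
          rw [Finset.prod_mul_distrib, Finset.prod_const, Finset.card_range]
      _ ≤ ((Mset G k).card : ℝ) := hstep1
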